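/- Let n ≥ 1, let total be a natural number, let frac ∈ ℝ^n satisfy frac_i ≥ 0 for all i and ∑_{i=1}^n frac_i = 1, and let avail ∈ ℕ^n satisfy total ≤ ∑_{i=1}^n avail_i and avail_i ≥ total·frac_i for all i. Then there exists b ∈ ℕ^n with ∑_{i=1}^n b_i = total, b_i ≤ avail_i for all i, and |b_i − total·frac_i| < 1 for all i; in particular the output of the Rounding procedure satisfies these properties. -/

import Mathlib

/-- correctness of the Rounding procedure. Let `n ≥ 1`, let `total ∈ ℕ`,
let `frac ∈ ℝ^n` be nonnegative with `∑ frac_i = 1`, and let `avail ∈ ℕ^n` satisfy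
`total ≤ ∑ avail_i` and `avail_i ≥ total·frac_i` for all `i`. Then there exists `b ∈ ℕ^n`
with `∑ b_i = total`, `b_i ≤ avail_i` for all `i`, and `|b_i − total·frac_i| < 1` for all
`i`; in particular the output of the Rounding procedure satisfies these properties. -/
theorem rounding_exists
    (n : ℕ) (hn : 1 ≤ n) (total : ℕ)
    (frac : Fin n → ℝ) (hfrac_nonneg : ∀ i, 0 ≤ frac i) (hfrac_sum : ∑ i, frac i = 1)
    (avail : Fin n → ℕ) (htotal : total ≤ ∑ i, avail i)
    (havail : ∀ i, (total : ℝ) * frac i ≤ (avail i : ℝ)) :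
    ∃ b : Fin n → ℕ,
      (∑ i, b i = total) ∧
      (∀ i, b i ≤ avail i) ∧
      (∀ i, |(b i : ℝ) - (total : ℝ) * frac i| < 1) := by
  set x : Fin n → ℝ := fun i => (total : ℝ) * frac i with hx
  have hx0 : ∀ i, 0 ≤ x i := fun i => mul_nonneg (Nat.cast_nonneg _) (hfrac_nonneg i)
  have hxsum : ∑ i, x i = total := by
    rw [hx]
    rw [← Finset.mul_sum, hfrac_sum, mul_one]
  set f : Fin n → ℕ := fun i => ⌊x i⌋₊ with hf
  have hfle : ∀ i, (f i : ℝ) ≤ x i := fun i => Nat.floor_le (hx0 i)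
  have hflt : ∀ i, x i < f i + 1 := fun i => Nat.lt_floor_add_one _
  have hsumf : ∑ i, f i ≤ total := by
    have h1 : ((∑ i, f i : ℕ) : ℝ) ≤ (total : ℝ) := by
      push_cast
      calc ∑ i, (f i : ℝ) ≤ ∑ i, x i := Finset.sum_le_sum fun i _ => hfle i
        _ = total := hxsum
    exact_mod_cast h1
  set d := total - ∑ i, f i with hd
  set S := Finset.univ.filter (fun i => (f i : ℝ) < x i) with hS
  have hdr : (d : ℝ) = ∑ i ∈ S, (x i - f i) := by
    have h1 : ∑ i, (x i - (f i : ℝ)) = ∑ i ∈ S, (x i - f i) := by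
      rw [hS, ← Finset.sum_filter_add_sum_filter_not Finset.univ (fun i => (f i : ℝ) < x i)
        (fun i => x i - f i)]
      have h0 : ∑ i ∈ Finset.univ.filter (fun i => ¬ (f i : ℝ) < x i), (x i - (f i : ℝ)) = 0 := by
        apply Finset.sum_eq_zero
        intro i hi
        simp only [Finset.mem_filter, not_lt] at hi
        have := hfle i
        linarith [hi.2]
      rw [h0, add_zero]
    have h2 : (d : ℝ) = (total : ℝ) - ∑ i, (f i : ℝ) := by
      rw [hd, Nat.cast_sub hsumf]
      push_cast
      ring
    rw [h2, ← h1, ← hxsum, Finset.sum_sub_distrib]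
  have hdS : d ≤ S.card := by
    rcases S.eq_empty_or_nonempty with hSe | hSne
    · have : (d : ℝ) = 0 := by rw [hdr, hSe, Finset.sum_empty]
      have : d = 0 := by exact_mod_cast this
      omega
    · have hlt : (d : ℝ) < S.card := by
        rw [hdr]
        calc ∑ i ∈ S, (x i - (f i : ℝ)) < ∑ i ∈ S, 1 := by
              apply Finset.sum_lt_sum_of_nonempty hSne
              intro i hi
              have := hflt i
              linarith
          _ = S.card := by simp
      have : d < S.card := by exact_mod_cast hlt
      omega
  obtain ⟨T, hTS, hTcard⟩ := Finset.exists_subset_card_eq hdS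
  refine ⟨fun i => f i + (if i ∈ T then 1 else 0), ?_, ?_, ?_⟩
  · rw [Finset.sum_add_distrib]
    have : ∑ i, (if i ∈ T then 1 else 0) = T.card := by
      rw [Finset.sum_ite_mem, Finset.univ_inter, Finset.card_eq_sum_ones]
    rw [this, hTcard]
    omega
  · intro i
    have hxa : x i ≤ (avail i : ℝ) := havail i
    by_cases hiT : i ∈ T
    · simp only [hiT, if_true]
      have hiS : i ∈ S := hTS hiT
      rw [hS, Finset.mem_filter] at hiS
      have : (f i : ℝ) < (avail i : ℝ) := lt_of_lt_of_le hiS.2 hxa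
      have : f i < avail i := by exact_mod_cast this
      omega
    · simp only [hiT, if_false, add_zero]
      have : (f i : ℝ) ≤ (avail i : ℝ) := le_trans (hfle i) hxa
      exact_mod_cast this
  · intro i
    by_cases hiT : i ∈ T
    · simp only [hiT, if_true]
      have hiS : i ∈ T → i ∈ S := fun h => hTS h
      have hiS2 := hiS hiT
      rw [hS, Finset.mem_filter] at hiS2
      have h1 := hiS2.2
      have h2 := hflt i
      have hxi : (total : ℝ) * frac i = x i := rfl
      rw [abs_lt, hxi]
      push_cast
      constructor <;> [linarith; linarith]
    · simp only [hiT, if_false, add_zero]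
      have h1 := hfle i
      have h2 := hflt i
      have hxi : (total : ℝ) * frac i = x i := rfl
      rw [abs_lt, hxi]
      constructor <;> [linarith; linarith]
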